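/- A triple of positive integers (A, B, C) is a triangular chord if and only if (1) for every permutation {i,j,k} of the indices, gcd of the i-th and j-th entries divides the k-th entry, and (2) if n = gcd(A,B,C) is even, then at least one of A/n, B/n, C/n is even. -/

import Mathlib

/-- A triple of integers is a triangular chord if it arises as the multiset of
pairwise Farey lambda lengths (qr - ps, us - rv, uq - pv) of three distinct
reduced fractions p/q < r/s < u/v. -/
def IsTriangularChord (A B C : ℤ) : Prop :=
  ∃ p q r s u v : ℤ, 0 < q ∧ 0 < s ∧ 0 < v ∧
    IsCoprime p q ∧ IsCoprime r s ∧ IsCoprime u v ∧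
    (p : ℚ) / q < (r : ℚ) / s ∧ (r : ℚ) / s < (u : ℚ) / v ∧
    ({q * r - p * s, u * s - r * v, u * q - p * v} : Multiset ℤ) = {A, B, C}

/-! ### Auxiliary definitions and lemmas -/

/-- The right-hand side condition of the characterization. -/
def ChordCond (A B C : ℤ) : Prop :=
  (((Int.gcd A B : ℤ) ∣ C ∧ (Int.gcd B C : ℤ) ∣ A ∧ (Int.gcd A C : ℤ) ∣ B) ∧
    (2 ∣ (Int.gcd A (Int.gcd B C) : ℤ) →
      2 ∣ A / (Int.gcd A (Int.gcd B C) : ℤ) ∨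
      2 ∣ B / (Int.gcd A (Int.gcd B C) : ℤ) ∨
      2 ∣ C / (Int.gcd A (Int.gcd B C) : ℤ)))

lemma gcd3_comm1 (A B C : ℤ) : Int.gcd B (Int.gcd A C) = Int.gcd A (Int.gcd B C) := by
  show Nat.gcd B.natAbs (Nat.gcd A.natAbs C.natAbs) = Nat.gcd A.natAbs (Nat.gcd B.natAbs C.natAbs)
  rw [← Nat.gcd_assoc, Nat.gcd_comm B.natAbs A.natAbs, Nat.gcd_assoc]

lemma gcd3_comm2 (A B C : ℤ) : Int.gcd A (Int.gcd C B) = Int.gcd A (Int.gcd B C) := by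
  rw [Int.gcd_comm C B]

lemma ChordCond.swap1 {A B C : ℤ} (h : ChordCond A B C) : ChordCond B A C := by
  obtain ⟨⟨h1, h2, h3⟩, h4⟩ := h
  refine ⟨⟨by rw [Int.gcd_comm B A]; exact h1, h3, h2⟩, ?_⟩
  rw [gcd3_comm1 A B C]
  tauto

lemma ChordCond.swap2 {A B C : ℤ} (h : ChordCond A B C) : ChordCond A C B := by
  obtain ⟨⟨h1, h2, h3⟩, h4⟩ := h
  refine ⟨⟨h3, by rw [Int.gcd_comm C B]; exact h2, h1⟩, ?_⟩
  rw [gcd3_comm2 A B C]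
  tauto

lemma pair_cases {y z b c : ℤ} (h : (y ::ₘ {z} : Multiset ℤ) = b ::ₘ {c}) :
    (y = b ∧ z = c) ∨ (y = c ∧ z = b) := by
  rw [Multiset.cons_eq_cons] at h
  rcases h with ⟨h1, h2⟩ | ⟨hne, cs, h1, h2⟩
  · exact Or.inl ⟨h1, Multiset.singleton_inj.mp h2⟩
  · rw [Multiset.singleton_eq_cons_iff] at h1
    obtain ⟨h1, rfl⟩ := h1
    exact Or.inr ⟨(Multiset.singleton_inj.mp h2).symm, h1⟩

lemma triple_cases {x y z a b c : ℤ} (h : ({x, y, z} : Multiset ℤ) = {a, b, c}) :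
    (x = a ∧ y = b ∧ z = c) ∨ (x = a ∧ y = c ∧ z = b) ∨
    (x = b ∧ y = a ∧ z = c) ∨ (x = b ∧ y = c ∧ z = a) ∨
    (x = c ∧ y = a ∧ z = b) ∨ (x = c ∧ y = b ∧ z = a) := by
  have h' : (x ::ₘ y ::ₘ {z} : Multiset ℤ) = a ::ₘ b ::ₘ {c} := h
  rw [Multiset.cons_eq_cons] at h'
  rcases h' with ⟨h1, h2⟩ | ⟨hne, u, h1, h2⟩
  · rcases pair_cases h2 with ⟨h3, h4⟩ | ⟨h3, h4⟩
    · exact Or.inl ⟨h1, h3, h4⟩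
    · exact Or.inr (Or.inl ⟨h1, h3, h4⟩)
  · rw [Multiset.cons_eq_cons] at h2
    rcases h2 with ⟨h3, h4⟩ | ⟨hne2, w, h3, h4⟩
    · rw [← h4] at h1
      rcases pair_cases h1 with ⟨h5, h6⟩ | ⟨h5, h6⟩
      · exact Or.inr (Or.inr (Or.inl ⟨h3.symm, h5, h6⟩))
      · exact Or.inr (Or.inr (Or.inr (Or.inl ⟨h3.symm, h5, h6⟩)))
    · rw [Multiset.singleton_eq_cons_iff] at h3
      obtain ⟨h5, rfl⟩ := h3
      rw [h4] at h1
      rcases pair_cases h1 with ⟨h6, h7⟩ | ⟨h6, h7⟩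
      · exact Or.inr (Or.inr (Or.inr (Or.inr (Or.inl ⟨h5.symm, h6, h7⟩))))
      · exact Or.inr (Or.inr (Or.inr (Or.inr (Or.inr ⟨h5.symm, h6, h7⟩))))

lemma zmod2_eq_one {a : ZMod 2} (h : a ≠ 0) : a = 1 := by revert h; revert a; decide

lemma parity_key : ∀ p q r s u v : ZMod 2, ¬(¬(p=0∧q=0) ∧ ¬(r=0∧s=0) ∧ ¬(u=0∧v=0) ∧
    q*r=p*s ∧ u*s=r*v ∧ u*q=p*v ∧ s=v+q ∧ r=u+p) := by decide

lemma coprime_not_both_even {p q : ℤ} (h : IsCoprime p q) :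
    ¬((p : ZMod 2) = 0 ∧ (q : ZMod 2) = 0) := by
  rintro ⟨e1, e2⟩
  rw [ZMod.intCast_zmod_eq_zero_iff_dvd] at e1 e2
  obtain ⟨α, β, hab⟩ := h
  have : (2:ℤ) ∣ 1 := hab ▸ dvd_add (Dvd.dvd.mul_left e1 α) (Dvd.dvd.mul_left e2 β)
  norm_num at this

lemma dvd_of_dvd_mul_coprime {d z r s : ℤ} (h : IsCoprime r s)
    (h1 : d ∣ r * z) (h2 : d ∣ s * z) : d ∣ z := by
  obtain ⟨α, β, hab⟩ := h
  have : z = α * (r * z) + β * (s * z) := by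
    calc z = (α * r + β * s) * z := by rw [hab, one_mul]
    _ = α * (r * z) + β * (s * z) := by ring
  rw [this]
  exact dvd_add (h1.mul_left α) (h2.mul_left β)

lemma chordCond_core (p q r s u v : ℤ) (hpq : IsCoprime p q) (hrs : IsCoprime r s)
    (huv : IsCoprime u v) :
    ChordCond (q*r - p*s) (u*s - r*v) (u*q - p*v) := by
  unfold ChordCond
  set x := q*r - p*s with hxdef
  set y := u*s - r*v with hydef
  set z := u*q - p*v with hzdef
  have id1 : s * z = x * v + y * q := by rw [hxdef, hydef, hzdef]; ring
  have id2 : r * z = x * u + y * p := by rw [hxdef, hydef, hzdef]; ring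
  constructor
  · refine ⟨?_, ?_, ?_⟩
    · -- gcd x y ∣ z
      have hdx : (Int.gcd x y : ℤ) ∣ x := (Int.gcd_dvd_left _ _)
      have hdy : (Int.gcd x y : ℤ) ∣ y := (Int.gcd_dvd_right _ _)
      exact dvd_of_dvd_mul_coprime hrs
        (id2 ▸ dvd_add (hdx.mul_right u) (hdy.mul_right p))
        (id1 ▸ dvd_add (hdx.mul_right v) (hdy.mul_right q))
    · -- gcd y z ∣ x
      have hdy : (Int.gcd y z : ℤ) ∣ y := (Int.gcd_dvd_left _ _)
      have hdz : (Int.gcd y z : ℤ) ∣ z := (Int.gcd_dvd_right _ _)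
      refine dvd_of_dvd_mul_coprime huv ?_ ?_
      · have : x * u = r * z - y * p := by rw [id2]; ring
        exact (mul_comm x u) ▸ this ▸ dvd_sub (hdz.mul_left r) (hdy.mul_right p)
      · have : x * v = s * z - y * q := by rw [id1]; ring
        exact (mul_comm x v) ▸ this ▸ dvd_sub (hdz.mul_left s) (hdy.mul_right q)
    · -- gcd x z ∣ y
      have hdx : (Int.gcd x z : ℤ) ∣ x := (Int.gcd_dvd_left _ _)
      have hdz : (Int.gcd x z : ℤ) ∣ z := (Int.gcd_dvd_right _ _)
      refine dvd_of_dvd_mul_coprime hpq ?_ ?_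
      · have : y * p = r * z - x * u := by rw [id2]; ring
        exact (mul_comm y p) ▸ this ▸ dvd_sub (hdz.mul_left r) (hdx.mul_right u)
      · have : y * q = s * z - x * v := by rw [id1]; ring
        exact (mul_comm y q) ▸ this ▸ dvd_sub (hdz.mul_left s) (hdx.mul_right v)
  · intro h2n
    set n : ℤ := (Int.gcd x (Int.gcd y z) : ℤ) with hndef
    have hnx : n ∣ x := (Int.gcd_dvd_left _ _)
    have hny : n ∣ y := (Int.gcd_dvd_right _ _).trans (Int.gcd_dvd_left _ _)
    have hnz : n ∣ z := (Int.gcd_dvd_right _ _).trans (Int.gcd_dvd_right _ _)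
    rcases eq_or_ne n 0 with hn0 | hn0
    · exact Or.inl (by rw [hn0, Int.ediv_zero]; exact dvd_zero 2)
    by_contra hcon
    push_neg at hcon
    obtain ⟨hc1, hc2, hc3⟩ := hcon
    have h2x : (2:ℤ) ∣ x := h2n.trans hnx
    have h2y : (2:ℤ) ∣ y := h2n.trans hny
    have h2z : (2:ℤ) ∣ z := h2n.trans hnz
    have det1 : (q : ZMod 2) * r = p * s := by
      have := (ZMod.intCast_zmod_eq_zero_iff_dvd x 2).mpr h2x
      rw [hxdef] at this; push_cast at this; linear_combination this
    have det2 : (u : ZMod 2) * s = r * v := by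
      have := (ZMod.intCast_zmod_eq_zero_iff_dvd y 2).mpr h2y
      rw [hydef] at this; push_cast at this; linear_combination this
    have det3 : (u : ZMod 2) * q = p * v := by
      have := (ZMod.intCast_zmod_eq_zero_iff_dvd z 2).mpr h2z
      rw [hzdef] at this; push_cast at this; linear_combination this
    have hx1 : ((x / n : ℤ) : ZMod 2) = 1 :=
      zmod2_eq_one (fun h => hc1 ((ZMod.intCast_zmod_eq_zero_iff_dvd _ 2).mp h))
    have hy1 : ((y / n : ℤ) : ZMod 2) = 1 :=
      zmod2_eq_one (fun h => hc2 ((ZMod.intCast_zmod_eq_zero_iff_dvd _ 2).mp h))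
    have hz1 : ((z / n : ℤ) : ZMod 2) = 1 :=
      zmod2_eq_one (fun h => hc3 ((ZMod.intCast_zmod_eq_zero_iff_dvd _ 2).mp h))
    have idd1 : s * (z / n) = (x / n) * v + (y / n) * q := by
      apply mul_left_cancel₀ hn0
      calc n * (s * (z / n)) = s * (n * (z / n)) := by ring
      _ = s * z := by rw [Int.mul_ediv_cancel' hnz]
      _ = x * v + y * q := id1
      _ = (n * (x / n)) * v + (n * (y / n)) * q := by
          rw [Int.mul_ediv_cancel' hnx, Int.mul_ediv_cancel' hny]
      _ = n * ((x / n) * v + (y / n) * q) := by ring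
    have idd2 : r * (z / n) = (x / n) * u + (y / n) * p := by
      apply mul_left_cancel₀ hn0
      calc n * (r * (z / n)) = r * (n * (z / n)) := by ring
      _ = r * z := by rw [Int.mul_ediv_cancel' hnz]
      _ = x * u + y * p := id2
      _ = (n * (x / n)) * u + (n * (y / n)) * p := by
          rw [Int.mul_ediv_cancel' hnx, Int.mul_ediv_cancel' hny]
      _ = n * ((x / n) * u + (y / n) * p) := by ring
    have e1 : (s : ZMod 2) = v + q := by
      have := congrArg (Int.cast : ℤ → ZMod 2) idd1
      push_cast at this
      rw [hx1, hy1, hz1] at this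
      linear_combination this
    have e2 : (r : ZMod 2) = u + p := by
      have := congrArg (Int.cast : ℤ → ZMod 2) idd2
      push_cast at this
      rw [hx1, hy1, hz1] at this
      linear_combination this
    exact parity_key p q r s u v
      ⟨coprime_not_both_even hpq, coprime_not_both_even hrs, coprime_not_both_even huv,
       det1, det2, det3, e1, e2⟩

lemma crt_lift (s₀ a' v₀ c' : ℤ) :
    ∀ N : ℕ, 0 < N →
    (∀ p : ℕ, p.Prime → p ∣ N → ∃ t : ℤ, ¬(p:ℤ) ∣ (s₀ + a'*t) ∧ ¬(p:ℤ) ∣ (v₀ + c'*t)) →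
    ∃ t : ℤ, IsCoprime ((s₀ + a'*t) * (v₀ + c'*t)) (N:ℤ) := by
  intro N
  induction N using Nat.strong_induction_on with
  | _ N ih =>
    intro hNpos hprimes
    rcases eq_or_ne N 1 with rfl | hN1
    · exact ⟨0, by exact_mod_cast isCoprime_one_right⟩
    obtain ⟨p, hp, hpN⟩ := Nat.exists_prime_and_dvd hN1
    set k := N.factorization p with hk
    set M := N / p ^ k with hM
    have hMdvd : M ∣ N := Nat.ordCompl_dvd N p
    have hpM : ¬ p ∣ M := Nat.not_dvd_ordCompl hp hNpos.ne'
    have hMpos : 0 < M := Nat.ordCompl_pos p hNpos.ne'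
    have hMlt : M < N :=
      lt_of_le_of_ne (Nat.le_of_dvd hNpos hMdvd) fun h => hpM (h ▸ hpN)
    have hfact : p ^ k * M = N := Nat.ordProj_mul_ordCompl_eq_self N p
    obtain ⟨t₁, ht₁⟩ := ih M hMlt hMpos (fun q hq hqM => hprimes q hq (hqM.trans hMdvd))
    obtain ⟨t₂, h2s, h2v⟩ := hprimes p hp hpN
    have hcop : IsCoprime (p:ℤ) (M:ℤ) :=
      Nat.isCoprime_iff_coprime.mpr (hp.coprime_iff_not_dvd.mpr hpM)
    obtain ⟨α, β, hab⟩ := hcop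
    refine ⟨t₁ * (α * p) + t₂ * (β * M), ?_⟩
    set t := t₁ * (α * p) + t₂ * (β * M) with htdef
    have hMt : (M:ℤ) ∣ t - t₁ := ⟨(t₂ - t₁) * β, by rw [htdef]; linear_combination t₁ * hab⟩
    have hpt : (p:ℤ) ∣ t - t₂ := ⟨(t₁ - t₂) * α, by rw [htdef]; linear_combination t₂ * hab⟩
    obtain ⟨m, hm⟩ := hMt
    have hsM : IsCoprime (s₀ + a'*t) (M:ℤ) := by
      have h1 : s₀ + a' * t = (s₀ + a' * t₁) + (M:ℤ) * (a' * m) := by linear_combination a' * hm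
      rw [h1]; exact ht₁.of_mul_left_left.add_mul_left_left _
    have hvM : IsCoprime (v₀ + c'*t) (M:ℤ) := by
      have h1 : v₀ + c' * t = (v₀ + c' * t₁) + (M:ℤ) * (c' * m) := by linear_combination c' * hm
      rw [h1]; exact ht₁.of_mul_left_right.add_mul_left_left _
    have hps : ¬ (p:ℤ) ∣ (s₀ + a'*t) := by
      intro h
      apply h2s
      have he : s₀ + a'*t₂ = (s₀ + a'*t) - a'*(t - t₂) := by ring
      rw [he]
      exact dvd_sub h (hpt.mul_left a')
    have hpv : ¬ (p:ℤ) ∣ (v₀ + c'*t) := by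
      intro h
      apply h2v
      have he : v₀ + c'*t₂ = (v₀ + c'*t) - c'*(t - t₂) := by ring
      rw [he]
      exact dvd_sub h (hpt.mul_left c')
    have hpZ : Prime (p:ℤ) := Int.prime_iff_natAbs_prime.mpr (by simpa using hp)
    have hpprod : ¬ (p:ℤ) ∣ (s₀ + a'*t) * (v₀ + c'*t) :=
      fun hd => ((hpZ.dvd_mul).mp hd).elim hps hpv
    have hppow : IsCoprime ((s₀ + a'*t) * (v₀ + c'*t)) ((p:ℤ)^k) :=
      (((hpZ.coprime_iff_not_dvd).mpr hpprod).symm).pow_right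
    rw [← hfact]
    push_cast
    exact hppow.mul_right (hsM.mul_left hvM)

lemma per_prime (A B C G a' b'' c' s₀ v₀ : ℤ)
    (hG0 : G ≠ 0)
    (hA' : A = G * a') (hB' : B = G * b'') (hC' : C = G * c')
    (hab : (Int.gcd A B : ℤ) ∣ C) (hbc : (Int.gcd B C : ℤ) ∣ A)
    (hcop : IsCoprime a' c')
    (heq : c' * s₀ - a' * v₀ = b'')
    (hodd : (2:ℤ) ∣ G → (2 ∣ a' ∨ 2 ∣ b'' ∨ 2 ∣ c'))
    (p : ℕ) (hp : p.Prime) (hpG : (p:ℤ) ∣ G) :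
    ∃ t : ℤ, ¬(p:ℤ) ∣ (s₀ + a'*t) ∧ ¬(p:ℤ) ∣ (v₀ + c'*t) := by
  haveI : Fact p.Prime := ⟨hp⟩
  have hpZ : Prime (p:ℤ) := Int.prime_iff_natAbs_prime.mpr (by simpa using hp)
  have key : ∀ τ : ZMod p, ((s₀ : ZMod p) + a' * τ ≠ 0) → ((v₀ : ZMod p) + c' * τ ≠ 0) →
      ∃ t : ℤ, ¬(p:ℤ) ∣ (s₀ + a'*t) ∧ ¬(p:ℤ) ∣ (v₀ + c'*t) := by
    intro τ h1 h2
    obtain ⟨t, rfl⟩ := ZMod.intCast_surjective τ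
    refine ⟨t, fun hd => h1 ?_, fun hd => h2 ?_⟩
    · have := (ZMod.intCast_zmod_eq_zero_iff_dvd _ p).mpr hd
      push_cast at this; exact this
    · have := (ZMod.intCast_zmod_eq_zero_iff_dvd _ p).mpr hd
      push_cast at this; exact this
  have hnotboth : ¬((p:ℤ) ∣ a' ∧ (p:ℤ) ∣ c') := by
    rintro ⟨h1, h2⟩
    obtain ⟨α, β, hXY⟩ := hcop
    exact hpZ.not_dvd_one (hXY ▸ dvd_add (h1.mul_left α) (h2.mul_left β))
  have L1 : (p:ℤ) ∣ a' → ¬ (p:ℤ) ∣ b'' := by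
    rintro ⟨a₂, ha₂⟩ ⟨b₂, hb₂⟩
    have h1 : (p:ℤ) * G ∣ A := ⟨a₂, by rw [hA', ha₂]; ring⟩
    have h2 : (p:ℤ) * G ∣ B := ⟨b₂, by rw [hB', hb₂]; ring⟩
    obtain ⟨e, he⟩ := (Int.dvd_coe_gcd h1 h2).trans hab
    rw [hC'] at he
    exact hnotboth ⟨⟨a₂, ha₂⟩, ⟨e, mul_left_cancel₀ hG0 (by linear_combination he)⟩⟩
  have L2 : (p:ℤ) ∣ c' → ¬ (p:ℤ) ∣ b'' := by
    rintro ⟨c₂, hc₂⟩ ⟨b₂, hb₂⟩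
    have h1 : (p:ℤ) * G ∣ C := ⟨c₂, by rw [hC', hc₂]; ring⟩
    have h2 : (p:ℤ) * G ∣ B := ⟨b₂, by rw [hB', hb₂]; ring⟩
    obtain ⟨e, he⟩ := (Int.dvd_coe_gcd h2 h1).trans hbc
    rw [hA'] at he
    exact hnotboth ⟨⟨e, mul_left_cancel₀ hG0 (by linear_combination he)⟩, ⟨c₂, hc₂⟩⟩
  have heqF : (c' : ZMod p) * s₀ - a' * v₀ = b'' := by
    have := congrArg (Int.cast : ℤ → ZMod p) heq
    push_cast at this; exact this
  have castdvd : ∀ x : ℤ, (x : ZMod p) = 0 ↔ (p:ℤ) ∣ x := fun x =>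
    ZMod.intCast_zmod_eq_zero_iff_dvd x p
  by_cases hA0 : (a' : ZMod p) = 0
  · have hB0 : (b'' : ZMod p) ≠ 0 := fun h => L1 ((castdvd a').mp hA0) ((castdvd b'').mp h)
    have hC0 : (c' : ZMod p) ≠ 0 := fun h => hB0 (by rw [← heqF, hA0, h]; ring)
    have hS0 : (s₀ : ZMod p) ≠ 0 := fun h => hB0 (by rw [← heqF, hA0, h]; ring)
    refine key ((1 - (v₀:ZMod p)) * (c' : ZMod p)⁻¹) ?_ ?_
    · rw [hA0]; simpa using hS0
    · have hv1 : (v₀:ZMod p) + c' * ((1 - v₀) * (c':ZMod p)⁻¹) = 1 := by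
        field_simp; ring
      rw [hv1]; exact one_ne_zero
  by_cases hC0 : (c' : ZMod p) = 0
  · have hB0 : (b'' : ZMod p) ≠ 0 := fun h => L2 ((castdvd c').mp hC0) ((castdvd b'').mp h)
    have hA0' : (a' : ZMod p) ≠ 0 := hA0
    have hV0 : (v₀ : ZMod p) ≠ 0 := fun h => hB0 (by rw [← heqF, hC0, h]; ring)
    refine key ((1 - (s₀:ZMod p)) * (a' : ZMod p)⁻¹) ?_ ?_
    · have hs1 : (s₀:ZMod p) + a' * ((1 - s₀) * (a':ZMod p)⁻¹) = 1 := by field_simp; ring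
      rw [hs1]; exact one_ne_zero
    · rw [hC0]; simpa using hV0
  have hA0' : (a' : ZMod p) ≠ 0 := hA0
  have hC0' : (c' : ZMod p) ≠ 0 := hC0
  by_cases hB0 : (b'' : ZMod p) = 0
  · refine key ((1 - (s₀:ZMod p)) * (a' : ZMod p)⁻¹) ?_ ?_
    · have hs1 : (s₀:ZMod p) + a' * ((1 - s₀) * (a':ZMod p)⁻¹) = 1 := by field_simp; ring
      rw [hs1]; exact one_ne_zero
    · intro hv
      have hs1 : (s₀:ZMod p) + a' * ((1 - s₀) * (a':ZMod p)⁻¹) = 1 := by field_simp; ring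
      have hid : (c' : ZMod p) * ((s₀:ZMod p) + a' * ((1 - s₀) * (a':ZMod p)⁻¹))
          - a' * ((v₀:ZMod p) + c' * ((1 - s₀) * (a':ZMod p)⁻¹)) = b'' := by
        linear_combination heqF
      rw [hs1, hv, hB0] at hid
      apply hC0
      linear_combination hid
  · have hp2 : p ≠ 2 := by
      intro hp2
      subst hp2
      rcases hodd (by exact_mod_cast hpG) with h | h | h
      · exact hA0 ((castdvd a').mpr (by exact_mod_cast h))
      · exact hB0 ((castdvd b'').mpr (by exact_mod_cast h))
      · exact hC0 ((castdvd c').mpr (by exact_mod_cast h))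
    have h2ne : (2 : ZMod p) ≠ 0 := by
      intro h2
      have := (ZMod.natCast_eq_zero_iff 2 p).mp (by exact_mod_cast h2)
      exact hp2 ((Nat.prime_dvd_prime_iff_eq hp Nat.prime_two).mp this)
    set S : ZMod p := if (c' : ZMod p) = (b'' : ZMod p) then 2 else 1 with hSdef
    have hS0 : S ≠ 0 := by
      rw [hSdef]; split_ifs
      · exact h2ne
      · exact one_ne_zero
    have hSne : (c' : ZMod p) * S ≠ (b'' : ZMod p) := by
      rw [hSdef]; split_ifs with hcb
      · intro h
        exact hB0 (by linear_combination h - 2 * hcb)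
      · intro h
        exact hcb (by rwa [mul_one] at h)
    refine key ((S - (s₀:ZMod p)) * (a' : ZMod p)⁻¹) ?_ ?_
    · have hs1 : (s₀:ZMod p) + a' * ((S - s₀) * (a':ZMod p)⁻¹) = S := by field_simp; ring
      rw [hs1]; exact hS0
    · intro hv
      have hs1 : (s₀:ZMod p) + a' * ((S - s₀) * (a':ZMod p)⁻¹) = S := by field_simp; ring
      have hid : (c' : ZMod p) * ((s₀:ZMod p) + a' * ((S - s₀) * (a':ZMod p)⁻¹))
          - a' * ((v₀:ZMod p) + c' * ((S - s₀) * (a':ZMod p)⁻¹)) = b'' := by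
        linear_combination heqF
      rw [hs1, hv] at hid
      apply hSne
      linear_combination hid

lemma backward_main (A B C G a' b'' c' : ℤ) (hA : 0 < A) (hB : 0 < B) (hC : 0 < C)
    (hG0 : 0 < G)
    (hA' : A = G * a') (hB' : B = G * b'') (hC' : C = G * c')
    (hab : (Int.gcd A B : ℤ) ∣ C) (hbc : (Int.gcd B C : ℤ) ∣ A)
    (hcop : IsCoprime a' c')
    (hodd : (2:ℤ) ∣ G → (2 ∣ a' ∨ 2 ∣ b'' ∨ 2 ∣ c')) :
    IsTriangularChord A B C := by
  obtain ⟨X, Y, hXY⟩ := hcop.symm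
  set s₀ : ℤ := X * b'' with hs₀def
  set v₀ : ℤ := -(Y * b'') with hv₀def
  have heq : c' * s₀ - a' * v₀ = b'' := by
    rw [hs₀def, hv₀def]; linear_combination b'' * hXY
  have hNeq : ((G.natAbs : ℤ)) = G := Int.natAbs_of_nonneg hG0.le
  have hNpos : 0 < G.natAbs := Int.natAbs_pos.mpr hG0.ne'
  obtain ⟨t, hcp⟩ := crt_lift s₀ a' v₀ c' G.natAbs hNpos (fun p hp hpN =>
    per_prime A B C G a' b'' c' s₀ v₀ hG0.ne' hA' hB' hC' hab hbc hcop heq hodd p hp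
      (by rw [← hNeq]; exact_mod_cast hpN))
  rw [hNeq] at hcp
  have ha'pos : 0 < a' := by
    have h1 : 0 < G * a' := hA' ▸ hA
    nlinarith
  have hc'pos : 0 < c' := by
    have h1 : 0 < G * c' := hC' ▸ hC
    nlinarith
  set j : ℤ := |s₀ + a'*t| + |v₀ + c'*t| + 1 with hjdef
  have hjpos : 0 < j := by
    have := abs_nonneg (s₀ + a'*t)
    have := abs_nonneg (v₀ + c'*t)
    rw [hjdef]; linarith
  set t' : ℤ := t + G * j with ht'def
  set s : ℤ := s₀ + a' * t' with hsdef
  set v : ℤ := v₀ + c' * t' with hvdef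
  have hs_shift : s = (s₀ + a'*t) + G*(a'*j) := by rw [hsdef, ht'def]; ring
  have hv_shift : v = (v₀ + c'*t) + G*(c'*j) := by rw [hvdef, ht'def]; ring
  have hcops : IsCoprime s G := by
    rw [hs_shift]; exact hcp.of_mul_left_left.add_mul_left_left _
  have hcopv : IsCoprime v G := by
    rw [hv_shift]; exact hcp.of_mul_left_right.add_mul_left_left _
  have haGj : j ≤ (a'*G)*j := le_mul_of_one_le_left hjpos.le (by nlinarith)
  have hcGj : j ≤ (c'*G)*j := le_mul_of_one_le_left hjpos.le (by nlinarith)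
  have hspos : 0 < s := by
    have h1 : -(|s₀ + a'*t|) ≤ s₀ + a'*t := neg_abs_le _
    have h2 : 0 ≤ |v₀ + c'*t| := abs_nonneg _
    have h3 : s = (s₀ + a'*t) + (a'*G)*j := by rw [hs_shift]; ring
    rw [h3, hjdef] at *
    linarith
  have hvpos : 0 < v := by
    have h1 : -(|v₀ + c'*t|) ≤ v₀ + c'*t := neg_abs_le _
    have h2 : 0 ≤ |s₀ + a'*t| := abs_nonneg _
    have h3 : v = (v₀ + c'*t) + (c'*G)*j := by rw [hv_shift]; ring
    rw [h3, hjdef] at *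
    linarith
  have heq' : c' * s - a' * v = b'' := by
    rw [hsdef, hvdef]; linear_combination heq
  have hkey : C * s - A * v = B := by
    rw [hA', hB', hC']; linear_combination G * heq'
  have hGcomb : ∃ X' Y', X' * A + Y' * C = G := by
    obtain ⟨X', Y', h⟩ := hcop
    exact ⟨X', Y', by rw [hA', hC']; linear_combination G * h⟩
  obtain ⟨X', Y', hcomb⟩ := hGcomb
  -- coprimality of A and s
  have hAs : IsCoprime A s := by
    rw [Int.isCoprime_iff_gcd_eq_one]
    have heA : (Int.gcd A s : ℤ) ∣ A := (Int.gcd_dvd_left _ _)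
    have heS : (Int.gcd A s : ℤ) ∣ s := (Int.gcd_dvd_right _ _)
    have heB : (Int.gcd A s : ℤ) ∣ B := by
      rw [← hkey]
      exact dvd_sub (heS.mul_left C) (heA.mul_right v)
    have heC : (Int.gcd A s : ℤ) ∣ C := (Int.dvd_coe_gcd heA heB).trans hab
    have heG : (Int.gcd A s : ℤ) ∣ G := by
      rw [← hcomb]
      exact dvd_add (heA.mul_left X') (heC.mul_left Y')
    obtain ⟨α, β, hαβ⟩ := hcops
    have h1 : (Int.gcd A s : ℤ) ∣ 1 :=
      hαβ ▸ dvd_add (heS.mul_left α) (heG.mul_left β)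
    exact_mod_cast Int.eq_one_of_dvd_one (by positivity) h1
  have hCv : IsCoprime C v := by
    rw [Int.isCoprime_iff_gcd_eq_one]
    have heC : (Int.gcd C v : ℤ) ∣ C := (Int.gcd_dvd_left _ _)
    have heV : (Int.gcd C v : ℤ) ∣ v := (Int.gcd_dvd_right _ _)
    have heB : (Int.gcd C v : ℤ) ∣ B := by
      rw [← hkey]
      exact dvd_sub (heC.mul_right s) (heV.mul_left A)
    have heA : (Int.gcd C v : ℤ) ∣ A := (Int.dvd_coe_gcd heB heC).trans hbc
    have heG : (Int.gcd C v : ℤ) ∣ G := by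
      rw [← hcomb]
      exact dvd_add (heA.mul_left X') (heC.mul_left Y')
    obtain ⟨α, β, hαβ⟩ := hcopv
    have h1 : (Int.gcd C v : ℤ) ∣ 1 :=
      hαβ ▸ dvd_add (heV.mul_left α) (heG.mul_left β)
    exact_mod_cast Int.eq_one_of_dvd_one (by positivity) h1
  refine ⟨0, 1, A, s, C, v, one_pos, hspos, hvpos,
    isCoprime_zero_left.mpr isUnit_one, hAs, hCv, ?_, ?_, ?_⟩
  · push_cast
    rw [zero_div]
    exact div_pos (by exact_mod_cast hA) (by exact_mod_cast hspos)
  · rw [div_lt_div_iff₀ (by exact_mod_cast hspos) (by exact_mod_cast hvpos)]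
    have h1 : A * v < C * s := by linarith [hkey, hB]
    exact_mod_cast h1
  · rw [show (1:ℤ)*A - 0*s = A by ring, show C*1 - 0*v = C by ring, hkey]

/-- Characterization of triangular chords: a triple of positive
integers (A,B,C) is a triangular chord iff (1) the gcd of any two entries divides
the third, and (2) if n = gcd(A,B,C) is even then one of A/n, B/n, C/n is even. -/
theorem chord_characterization (A B C : ℤ) (hA : 0 < A) (hB : 0 < B) (hC : 0 < C) :
    IsTriangularChord A B C ↔
      (((Int.gcd A B : ℤ) ∣ C ∧ (Int.gcd B C : ℤ) ∣ A ∧ (Int.gcd A C : ℤ) ∣ B) ∧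
        (2 ∣ (Int.gcd A (Int.gcd B C) : ℤ) →
          2 ∣ A / (Int.gcd A (Int.gcd B C) : ℤ) ∨
          2 ∣ B / (Int.gcd A (Int.gcd B C) : ℤ) ∨
          2 ∣ C / (Int.gcd A (Int.gcd B C) : ℤ))) := by
  constructor
  · rintro ⟨p, q, r, s, u, v, hq, hs, hv, hpq, hrs, huv, -, -, hmul⟩
    have core := chordCond_core p q r s u v hpq hrs huv
    rcases triple_cases hmul with ⟨h1,h2,h3⟩|⟨h1,h2,h3⟩|⟨h1,h2,h3⟩|⟨h1,h2,h3⟩|⟨h1,h2,h3⟩|⟨h1,h2,h3⟩ <;>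
      rw [h1, h2, h3] at core
    · exact core
    · exact core.swap2
    · exact core.swap1
    · exact core.swap2.swap1
    · exact core.swap1.swap2
    · exact core.swap1.swap2.swap1
  · rintro ⟨⟨hab, hbc, hac⟩, hpar⟩
    have hGnat_pos : 0 < Int.gcd A C := by
      apply Nat.pos_of_ne_zero
      intro h
      rw [Int.gcd_eq_zero_iff] at h
      exact hA.ne' h.1
    have hG0 : (0:ℤ) < (Int.gcd A C : ℤ) := by exact_mod_cast hGnat_pos
    have hGA : (Int.gcd A C : ℤ) ∣ A := (Int.gcd_dvd_left _ _)
    have hGC : (Int.gcd A C : ℤ) ∣ C := (Int.gcd_dvd_right _ _)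
    have hA' : A = (Int.gcd A C : ℤ) * (A / (Int.gcd A C : ℤ)) :=
      (Int.mul_ediv_cancel' hGA).symm
    have hB' : B = (Int.gcd A C : ℤ) * (B / (Int.gcd A C : ℤ)) :=
      (Int.mul_ediv_cancel' hac).symm
    have hC' : C = (Int.gcd A C : ℤ) * (C / (Int.gcd A C : ℤ)) :=
      (Int.mul_ediv_cancel' hGC).symm
    have hcop : IsCoprime (A / (Int.gcd A C : ℤ)) (C / (Int.gcd A C : ℤ)) :=
      Int.isCoprime_iff_gcd_eq_one.mpr (Int.gcd_div_gcd_div_gcd hGnat_pos)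
    refine backward_main A B C _ _ _ _ hA hB hC hG0 hA' hB' hC' hab hbc hcop ?_
    -- the parity condition
    intro h2G
    by_contra hcon
    push_neg at hcon
    obtain ⟨h2a, h2b, h2c⟩ := hcon
    set n : ℤ := (Int.gcd A (Int.gcd B C) : ℤ) with hndef
    have hnA : n ∣ A := (Int.gcd_dvd_left _ _)
    have hnB : n ∣ B := (Int.gcd_dvd_right _ _).trans (Int.gcd_dvd_left _ _)
    have hnC : n ∣ C := (Int.gcd_dvd_right _ _).trans (Int.gcd_dvd_right _ _)
    have hn0 : n ≠ 0 := fun h => hA.ne' (Int.zero_dvd.mp (h ▸ hnA))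
    have hnpos : 0 < n := lt_of_le_of_ne (by rw [hndef]; positivity) (Ne.symm hn0)
    have hnG : n ∣ (Int.gcd A C : ℤ) := Int.dvd_coe_gcd hnA hnC
    have h2n : (2:ℤ) ∣ n := by
      rw [hndef]
      exact Int.dvd_coe_gcd (h2G.trans hGA) (Int.dvd_coe_gcd (h2G.trans hac) (h2G.trans hGC))
    obtain ⟨g₁, hg₁⟩ := hnG
    have h2g₁ : (2:ℤ) ∣ g₁ := by
      rcases hpar h2n with h | h | h
      · have hdiv : A / n = g₁ * (A / (Int.gcd A C : ℤ)) := by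
          have h1 : A = n * (g₁ * (A / (Int.gcd A C : ℤ))) := by
            linear_combination hA' + (A / (Int.gcd A C : ℤ)) * hg₁
          conv_lhs => rw [h1]
          exact Int.mul_ediv_cancel_left _ hn0
        rw [hdiv] at h
        exact (Int.prime_two.dvd_mul.mp h).resolve_right h2a
      · have hdiv : B / n = g₁ * (B / (Int.gcd A C : ℤ)) := by
          have h1 : B = n * (g₁ * (B / (Int.gcd A C : ℤ))) := by
            linear_combination hB' + (B / (Int.gcd A C : ℤ)) * hg₁
          conv_lhs => rw [h1]
          exact Int.mul_ediv_cancel_left _ hn0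
        rw [hdiv] at h
        exact (Int.prime_two.dvd_mul.mp h).resolve_right h2b
      · have hdiv : C / n = g₁ * (C / (Int.gcd A C : ℤ)) := by
          have h1 : C = n * (g₁ * (C / (Int.gcd A C : ℤ))) := by
            linear_combination hC' + (C / (Int.gcd A C : ℤ)) * hg₁
          conv_lhs => rw [h1]
          exact Int.mul_ediv_cancel_left _ hn0
        rw [hdiv] at h
        exact (Int.prime_two.dvd_mul.mp h).resolve_right h2c
    obtain ⟨g₂, hg₂⟩ := h2g₁
    have h2nG : 2 * n ∣ (Int.gcd A C : ℤ) := ⟨g₂, by rw [hg₁, hg₂]; ring⟩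
    have h2nn : 2 * n ∣ n := by
      rw [hndef]
      exact Int.dvd_coe_gcd (h2nG.trans hGA) (Int.dvd_coe_gcd (h2nG.trans hac) (h2nG.trans hGC))
    have := Int.le_of_dvd hnpos h2nn
    linarith
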